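/- Let $(\lambda_n)_{n\ge2}$ be positive reals with $\sum_{n\ge2}\lambda_n^{-2}<\infty$, and set $A_n=\sum_{i=n+1}^\infty \lambda_i^{-1}$ (assumed finite) and $B_n^2=\sum_{i=n+1}^\infty \lambda_i^{-2}$. Then $\lambda_n^{-1}=o(A_n)$ as $n\to\infty$ if and only if $B_n = o(A_n)$ as $n\to\infty$. -/

import Mathlib

open Filter Topology

theorem little_o_equivalence (lam : ℕ → ℝ) (hpos : ∀ n, 0 < lam n)
    (hsum : Summable fun n => (lam n)⁻¹)
    (hsum2 : Summable fun n => ((lam n)⁻¹) ^ 2)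
    (A : ℕ → ℝ) (hA : ∀ n, A n = ∑' i : ℕ, (lam (n + 1 + i))⁻¹)
    (B : ℕ → ℝ) (hB : ∀ n, B n = Real.sqrt (∑' i : ℕ, ((lam (n + 1 + i))⁻¹) ^ 2)) :
    Tendsto (fun n => (lam n)⁻¹ / A n) atTop (𝓝 0) ↔
      Tendsto (fun n => B n / A n) atTop (𝓝 0) := by
  set a : ℕ → ℝ := fun n => (lam n)⁻¹ with ha_def
  have hA : ∀ n, A n = ∑' i : ℕ, a (n + 1 + i) := hA
  have hB : ∀ n, B n = Real.sqrt (∑' i : ℕ, (a (n + 1 + i)) ^ 2) := hB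
  have hsum : Summable a := hsum
  have hsum2 : Summable (fun n => (a n) ^ 2) := hsum2
  have ha : ∀ n, 0 < a n := fun n => inv_pos.2 (hpos n)
  have hAsum : ∀ n, Summable (fun i => a (n + 1 + i)) := by
    intro n
    exact ((summable_nat_add_iff (n + 1)).2 hsum).congr
      (fun i => by show a (i + (n+1)) = a (n+1+i); congr 1; omega)
  have hS2sum : ∀ n, Summable (fun i => (a (n + 1 + i)) ^ 2) := by
    intro n
    exact ((summable_nat_add_iff (n + 1)).2 hsum2).congr
      (fun i => by show (a (i + (n+1)))^2 = (a (n+1+i))^2; congr 2; omega)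
  have hApos : ∀ n, 0 < A n := fun n => by
    rw [hA n]; exact Summable.tsum_pos (hAsum n) (fun i => (ha _).le) 0 (ha _)
  have hArec : ∀ n, A n = a (n + 1) + A (n + 1) := by
    intro n
    rw [hA n, hA (n + 1), Summable.tsum_eq_zero_add (hAsum n)]
    have h0 : n + 1 + 0 = n + 1 := by omega
    rw [h0]
    congr 1
    exact tsum_congr fun i => by congr 1; omega
  have hAanti : Antitone A := antitone_nat_of_succ_le (fun n => by
    have := hArec n; have := ha (n + 1); linarith)
  have hBnonneg : ∀ n, 0 ≤ B n := fun n => (hB n) ▸ Real.sqrt_nonneg _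
  have ha_le_B : ∀ n, a (n + 1) ≤ B n := by
    intro n
    have h1 : (a (n + 1)) ^ 2 ≤ ∑' i, (a (n + 1 + i)) ^ 2 := by
      have := Summable.le_tsum (hS2sum n) 0 (fun j _ => sq_nonneg _)
      simpa using this
    calc a (n + 1) = Real.sqrt ((a (n + 1)) ^ 2) := (Real.sqrt_sq (ha _).le).symm
      _ ≤ Real.sqrt (∑' i, (a (n + 1 + i)) ^ 2) := Real.sqrt_le_sqrt h1
      _ = B n := (hB n).symm
  show Tendsto (fun n => a n / A n) atTop (𝓝 0) ↔ Tendsto (fun n => B n / A n) atTop (𝓝 0)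
  constructor
  · -- forward direction
    intro h
    have key : ∀ ε > 0, ∃ N, ∀ n ≥ N, B n / A n ≤ ε := by
      intro ε hε
      obtain ⟨N, hN⟩ := (Metric.tendsto_atTop.1 h) (ε ^ 2) (by positivity)
      refine ⟨N, fun n hn => ?_⟩
      have haA : ∀ i, N ≤ i → a i ≤ ε ^ 2 * A i := by
        intro i hi
        have h1 := hN i hi
        rw [Real.dist_eq, sub_zero,
          abs_of_nonneg (div_nonneg (ha i).le (hApos i).le)] at h1
        have h2 := (div_lt_iff₀ (hApos i)).1 h1
        linarith
      have hAa : Summable (fun i => A (n + 1 + i) * a (n + 1 + i)) := by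
        refine Summable.of_nonneg_of_le (fun i => mul_nonneg (hApos _).le (ha _).le)
          (fun i => ?_) ((hAsum n).mul_left (A 0))
        exact mul_le_mul_of_nonneg_right (hAanti (Nat.zero_le _)) (ha _).le
      have hpartial : ∀ m, ∑ i ∈ Finset.range m, A (n + 1 + i) * a (n + 1 + i)
          ≤ (A n ^ 2 - A (n + m) ^ 2) / 2 := by
        intro m
        induction m with
        | zero => simp
        | succ m ih =>
          rw [Finset.sum_range_succ]
          have e1 : n + 1 + m = n + m + 1 := by omega
          have e2 : n + (m + 1) = n + m + 1 := by omega
          rw [e1, e2]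
          have h1 := hArec (n + m)
          nlinarith [sq_nonneg (a (n + m + 1)), ha (n + m + 1), hApos (n + m + 1)]
      have htsum : ∑' i, A (n + 1 + i) * a (n + 1 + i) ≤ A n ^ 2 / 2 := by
        refine Summable.tsum_le_of_sum_range_le hAa (fun m => le_trans (hpartial m) ?_)
        nlinarith [sq_nonneg (A (n + m))]
      have hSle : (∑' i, (a (n + 1 + i)) ^ 2) ≤ ε ^ 2 * (A n ^ 2 / 2) := by
        calc (∑' i, (a (n + 1 + i)) ^ 2)
            ≤ ∑' i, ε ^ 2 * (A (n + 1 + i) * a (n + 1 + i)) := by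
              refine Summable.tsum_le_tsum (fun i => ?_) (hS2sum n) (hAa.mul_left _)
              have h1 := haA (n + 1 + i) (by omega)
              nlinarith [ha (n + 1 + i)]
          _ = ε ^ 2 * ∑' i, A (n + 1 + i) * a (n + 1 + i) := tsum_mul_left
          _ ≤ ε ^ 2 * (A n ^ 2 / 2) :=
              mul_le_mul_of_nonneg_left htsum (by positivity)
      have hBle : B n ≤ ε * A n := by
        rw [hB n]
        have h1 : (∑' i, (a (n + 1 + i)) ^ 2) ≤ (ε * A n) ^ 2 := by nlinarith [sq_nonneg (ε * A n)]
        calc Real.sqrt (∑' i, (a (n + 1 + i)) ^ 2)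
            ≤ Real.sqrt ((ε * A n) ^ 2) := Real.sqrt_le_sqrt h1
          _ = ε * A n := Real.sqrt_sq (mul_nonneg hε.le (hApos n).le)
      rw [div_le_iff₀ (hApos n)]
      linarith
    rw [Metric.tendsto_atTop]
    intro ε hε
    obtain ⟨N, hN⟩ := key (ε / 2) (by positivity)
    refine ⟨N, fun n hn => ?_⟩
    rw [Real.dist_eq, sub_zero,
      abs_of_nonneg (div_nonneg (hBnonneg n) (hApos n).le)]
    linarith [hN n hn]
  · -- reverse direction
    intro h
    have hg : Tendsto (fun n => a (n + 1) / A n) atTop (𝓝 0) := by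
      refine squeeze_zero (fun n => div_nonneg (ha _).le (hApos n).le)
        (fun n => ?_) h
      exact (div_le_div_iff_of_pos_right (hApos n)).2 (ha_le_B n)
    have h2 : Tendsto (fun n => a (n + 1) / A (n + 1)) atTop (𝓝 0) := by
      have hq : Tendsto (fun n => a (n + 1) / A n / (1 - a (n + 1) / A n)) atTop (𝓝 0) := by
        have hd : Tendsto (fun n => 1 - a (n + 1) / A n) atTop (𝓝 (1 - 0)) :=
          tendsto_const_nhds.sub hg
        have := hg.div hd (by norm_num)
        simpa [Pi.div_def] using this
      refine hq.congr fun n => ?_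
      have hA1 : A (n + 1) = A n - a (n + 1) := by linarith [hArec n]
      have hne : A n ≠ 0 := (hApos n).ne'
      have hne2 : A n - a (n + 1) ≠ 0 := by rw [← hA1]; exact (hApos (n + 1)).ne'
      rw [hA1]
      field_simp
    exact (tendsto_add_atTop_iff_nat 1).1 h2
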